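/- Consider the observation channel h(x,z) = x·1_{x>z} + z·1_{x≤z} on a compact state space 𝒳 ⊂ ℝ with noise law Q admitting a Lebesgue density q, and suppose Q(Z < x_min) ≥ ε > 0 where x_min is a lower bound of 𝒳. Then for every continuously differentiable f on 𝒳, the function g(x) = c + ∫_{−∞}^x 1_𝒳(u) f'(u)/Q(Z ≤ u) du (with c chosen to match a boundary value) is bounded on 𝒳 and satisfies ∫_𝒵 g(h(x,z)) Q(dz) = f(x) for all x ∈ 𝒳. -/

import Mathlib

open MeasureTheory

/-- The function `g(y) = c + ∫_{-∞}^y 1_𝒳(u) f'(u)/Q(Z ≤ u) du` from the indicator-channel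
construction, for the state space `𝒳 = [A, B]`. -/
noncomputable def gfun (A B : ℝ) (f : ℝ → ℝ) (Q : Measure ℝ) (c y : ℝ) : ℝ :=
  c + ∫ u in A..y, Set.indicator (Set.Icc A B)
    (fun u => deriv f u / (Q {z | z ≤ u}).toReal) u

/-- For the channel `h(x,z) = x·1_{x>z} + z·1_{x≤z}` on the compact state
space `𝒳 = [A,B]`, with noise law `Q` having a Lebesgue density `q` and satisfying
`Q(Z < x_min) ≥ ε > 0` for a lower bound `x_min` of `𝒳`, and for any continuously
differentiable `f`, the function `g(y) = c + ∫_{-∞}^y 1_𝒳(u) f'(u)/Q(Z ≤ u) du` (for a suitable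
constant `c`) is bounded on `𝒳` and satisfies `∫ g(h(x,z)) Q(dz) = f(x)` for all `x ∈ 𝒳`. -/
theorem indicator_channel_observable
    (A B : ℝ) (hAB : A ≤ B)
    (q : ℝ → ℝ) (hq0 : ∀ z, 0 ≤ q z) (hqm : Measurable q)
    (Q : Measure ℝ) [IsProbabilityMeasure Q]
    (hQ : Q = MeasureTheory.volume.withDensity (fun z => ENNReal.ofReal (q z)))
    (xm : ℝ) (hxm : xm ≤ A)
    (ε : ℝ) (hε : 0 < ε) (hQxm : ε ≤ (Q {z | z < xm}).toReal)
    (f : ℝ → ℝ) (hf : ContDiff ℝ 1 f) :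
    ∃ c : ℝ,
      (∃ M : ℝ, ∀ x ∈ Set.Icc A B, |gfun A B f Q c x| ≤ M) ∧
      ∀ x ∈ Set.Icc A B,
        (∫ z, gfun A B f Q c (if z < x then x else z) ∂Q) = f x := by
  classical
  -- Q has no atoms
  have hQs : ∀ a : ℝ, Q {a} = 0 := by
    intro a
    rw [hQ, withDensity_apply _ (measurableSet_singleton a)]
    exact setLIntegral_measure_zero _ _ (measure_singleton a)
  haveI : NullSingletonClass Q := ⟨hQs⟩
  -- the cdf
  set F : ℝ → ℝ := fun u => (Q (Set.Iic u)).toReal with hFdef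
  have hFmono : Monotone F := by
    intro u v huv
    exact ENNReal.toReal_mono (measure_ne_top Q _) (measure_mono (Set.Iic_subset_Iic.2 huv))
  have hFmeas : Measurable F := hFmono.measurable
  have hF0 : ∀ u, 0 ≤ F u := fun u => ENNReal.toReal_nonneg
  have hF1 : ∀ u, F u ≤ 1 := by
    intro u
    have := ENNReal.toReal_mono (measure_ne_top Q Set.univ) (measure_mono (Set.subset_univ (Set.Iic u)))
    simpa [measure_univ] using this
  have hFε : ∀ u, A ≤ u → ε ≤ F u := by
    intro u hu
    refine le_trans hQxm (ENNReal.toReal_mono (measure_ne_top Q _) (measure_mono ?_))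
    intro z hz
    exact le_trans (le_of_lt hz) (hxm.trans hu)
  -- the integrand φ
  set φ : ℝ → ℝ := Set.indicator (Set.Icc A B) (fun u => deriv f u / F u) with hφdef
  have hderiv_cont : Continuous (deriv f) := hf.continuous_deriv le_rfl
  obtain ⟨Mf, hMf⟩ := (isCompact_Icc : IsCompact (Set.Icc A B)).exists_bound_of_continuousOn
    hderiv_cont.continuousOn
  set M : ℝ := max Mf 0 / ε with hMdef
  have hM0 : 0 ≤ M := div_nonneg (le_max_right _ _) hε.le
  have hbase : ∀ u ∈ Set.Icc A B, |deriv f u / F u| ≤ M := by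
    intro u hu
    have hFu : ε ≤ F u := hFε u hu.1
    have hFpos : 0 < F u := lt_of_lt_of_le hε hFu
    rw [abs_div, abs_of_pos hFpos]
    have h1 : |deriv f u| ≤ max Mf 0 := le_trans (by simpa using hMf u hu) (le_max_left _ _)
    exact div_le_div₀ (le_max_right Mf 0) h1 hε hFu
  have hφbdd : ∀ u, |φ u| ≤ M := by
    intro u
    by_cases hu : u ∈ Set.Icc A B
    · rw [hφdef]; rw [Set.indicator_of_mem hu]; exact hbase u hu
    · rw [hφdef]; rw [Set.indicator_of_notMem hu]; simpa using hM0
  have hφmeas : Measurable φ := by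
    rw [hφdef]
    exact (hderiv_cont.measurable.div hFmeas).indicator measurableSet_Icc
  have hφint : Integrable φ (volume : Measure ℝ) := by
    rw [hφdef, integrable_indicator_iff measurableSet_Icc]
    haveI : IsFiniteMeasure ((volume : Measure ℝ).restrict (Set.Icc A B)) := by
      constructor
      rw [Measure.restrict_apply_univ]
      exact measure_Icc_lt_top
    refine ⟨(hderiv_cont.measurable.div hFmeas).aestronglyMeasurable.restrict, ?_⟩
    apply HasFiniteIntegral.of_bounded (C := M)
    rw [ae_restrict_iff' measurableSet_Icc]
    exact MeasureTheory.ae_of_all _ fun u hu => by rw [Real.norm_eq_abs]; exact hbase u hu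
  -- the primitive G
  set G : ℝ → ℝ := fun y => ∫ u in A..y, φ u with hGdef
  have hGcont : Continuous G := by
    rw [hGdef]
    exact intervalIntegral.continuous_primitive (fun a b => hφint.intervalIntegrable) A
  set C0 : ℝ := ∫ u, |φ u| with hC0def
  have hC0 : 0 ≤ C0 := by
    rw [hC0def]; exact integral_nonneg fun u => abs_nonneg _
  have hGabs : ∀ y, |G y| ≤ C0 := by
    intro y
    rw [hGdef, hC0def]
    calc |∫ u in A..y, φ u| ≤ ∫ u in Set.uIoc A y, |φ u| := by
          simpa [Real.norm_eq_abs] using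
            intervalIntegral.norm_integral_le_integral_norm_uIoc (f := φ) (a := A) (b := y)
              (μ := volume)
      _ ≤ ∫ u, |φ u| :=
          setIntegral_le_integral hφint.abs (Filter.Eventually.of_forall fun u => abs_nonneg _)
  -- complementary cdf
  have hcompl : ∀ u : ℝ, (Q (Set.Ici u)).toReal = 1 - F u := by
    intro u
    have h1 : Q (Set.Ici u) = Q (Set.Ioi u) := (measure_congr (Ioi_ae_eq_Ici (μ := Q))).symm
    have h2 : Q (Set.Iic u) + Q (Set.Ioi u) = 1 := by
      rw [← measure_univ (μ := Q), ← Set.Iic_union_Ioi (a := u)]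
      exact (measure_union (Set.Iic_disjoint_Ioi le_rfl) measurableSet_Ioi).symm
    have h3 := congrArg ENNReal.toReal h2
    rw [ENNReal.toReal_add (measure_ne_top _ _) (measure_ne_top _ _), ENNReal.toReal_one] at h3
    rw [h1, hFdef]
    linarith [h3]
  have hIio : ∀ u : ℝ, (Q (Set.Iio u)).toReal = F u := by
    intro u
    rw [hFdef]
    exact congrArg ENNReal.toReal (measure_congr (Iio_ae_eq_Iic (μ := Q)))
  -- the function ψ appearing after Fubini
  set ψ : ℝ → ℝ := fun u => (Q (Set.Ici u)).toReal * φ u with hψdef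
  have hψmeas : Measurable ψ := by
    rw [hψdef]
    have : Antitone fun u : ℝ => (Q (Set.Ici u)).toReal := by
      intro u v huv
      exact ENNReal.toReal_mono (measure_ne_top Q _) (measure_mono (Set.Ici_subset_Ici.2 huv))
    exact (this.measurable).mul hφmeas
  have hψint : Integrable ψ (volume : Measure ℝ) := by
    refine hφint.abs.mono hψmeas.aestronglyMeasurable (MeasureTheory.ae_of_all _ fun u => ?_)
    rw [hψdef]
    simp only [Real.norm_eq_abs, abs_abs, abs_mul]
    apply mul_le_of_le_one_left (abs_nonneg _)
    rw [abs_of_nonneg ENNReal.toReal_nonneg]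
    calc (Q (Set.Ici u)).toReal = 1 - F u := hcompl u
      _ ≤ 1 := by linarith [hF0 u]
  have hψ'int : ∀ a b : ℝ, IntervalIntegrable (fun u => (1 - F u) * φ u) volume a b := by
    intro a b
    apply Integrable.intervalIntegrable
    have : (fun u => (1 - F u) * φ u) = ψ := by
      funext u
      show (1 - F u) * φ u = (Q (Set.Ici u)).toReal * φ u
      rw [hcompl u]
    rw [this]
    exact hψint
  -- the constant
  set J : ℝ := ∫ u in A..B, (1 - F u) * φ u with hJdef
  have hgfun : ∀ c y, gfun A B f Q c y = c + G y := fun c y => rfl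
  refine ⟨f A - J, ⟨|f A - J| + C0, ?_⟩, ?_⟩
  · intro x hx
    rw [hgfun]
    calc |f A - J + G x| ≤ |f A - J| + |G x| := abs_add_le _ _
      _ ≤ |f A - J| + C0 := by linarith [hGabs x]
  intro x hx
  obtain ⟨hxA, hxB⟩ := hx
  simp only [hgfun]
  -- integrability of the full integrand
  have hgbdd : ∀ y, ‖f A - J + G y‖ ≤ |f A - J| + C0 := by
    intro y
    rw [Real.norm_eq_abs]
    calc |f A - J + G y| ≤ |f A - J| + |G y| := abs_add_le _ _
      _ ≤ |f A - J| + C0 := by linarith [hGabs y]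
  have hitemeas : Measurable fun z : ℝ => f A - J + G (if z < x then x else z) := by
    have hm2 : Measurable fun z : ℝ => if z < x then G x else G z :=
      Measurable.ite (measurableSet_lt measurable_id measurable_const) measurable_const
        hGcont.measurable
    have : (fun z : ℝ => f A - J + G (if z < x then x else z))
        = fun z : ℝ => f A - J + (if z < x then G x else G z) := by
      funext z
      by_cases hz : z < x <;> simp [hz]
    rw [this]
    exact measurable_const.add hm2
  have hint : Integrable (fun z => f A - J + G (if z < x then x else z)) Q :=
    ⟨hitemeas.aestronglyMeasurable,
      HasFiniteIntegral.of_bounded (MeasureTheory.ae_of_all _ fun z => hgbdd _)⟩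
  -- split the integral at x
  have hsplit : (∫ z, (f A - J + G (if z < x then x else z)) ∂Q)
      = (Q (Set.Iio x)).toReal * (f A - J + G x)
        + ∫ z in Set.Ici x, (f A - J + G z) ∂Q := by
    rw [← integral_add_compl (measurableSet_Iio (a := x)) hint, Set.compl_Iio]
    congr 1
    rw [setIntegral_congr_fun measurableSet_Iio
        (fun z hz => by rw [if_pos (Set.mem_Iio.mp hz)]),
      setIntegral_const, smul_eq_mul, measureReal_def]
    exact setIntegral_congr_fun measurableSet_Ici
      (fun z hz => by rw [if_neg (not_lt.mpr (Set.mem_Ici.mp hz))])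
  have hGzx_int : IntegrableOn (fun z => G z - G x) (Set.Ici x) Q := by
    refine ⟨(hGcont.measurable.sub measurable_const).aestronglyMeasurable.restrict,
      HasFiniteIntegral.of_bounded (C := C0 + C0) (MeasureTheory.ae_of_all _ fun z => ?_)⟩
    rw [Real.norm_eq_abs]
    calc |G z - G x| ≤ |G z| + |G x| := abs_sub _ _
      _ ≤ C0 + C0 := by linarith [hGabs z, hGabs x]
  have hIci : (∫ z in Set.Ici x, (f A - J + G z) ∂Q)
      = (Q (Set.Ici x)).toReal * (f A - J + G x) + ∫ z in Set.Ici x, (G z - G x) ∂Q := by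
    have heq : (fun z => f A - J + G z) = fun z => (f A - J + G x) + (G z - G x) := by
      funext z; ring
    rw [heq, integral_add (integrable_const _) hGzx_int, setIntegral_const, smul_eq_mul, measureReal_def]
  have hone : (Q (Set.Iio x)).toReal + (Q (Set.Ici x)).toReal = 1 := by
    rw [hIio x, hcompl x]; ring
  -- the Fubini step
  have hGzx : Set.EqOn (fun z => G z - G x)
      (fun z => ∫ u, Set.indicator (Set.Ioc x z) φ u) (Set.Ici x) := by
    intro z hz
    have h1 : G z - G x = ∫ u in x..z, φ u := by
      rw [hGdef]
      exact intervalIntegral.integral_interval_sub_left hφint.intervalIntegrable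
        hφint.intervalIntegrable
    simp only
    rw [h1, intervalIntegral.integral_of_le (Set.mem_Ici.mp hz),
      ← integral_indicator measurableSet_Ioc]
  have hK : Integrable (Function.uncurry fun z u => Set.indicator (Set.Ioc x z) φ u)
      ((Q.restrict (Set.Ici x)).prod volume) := by
    have hS : MeasurableSet {p : ℝ × ℝ | x < p.2 ∧ p.2 ≤ p.1} :=
      (measurableSet_lt measurable_const measurable_snd).inter
        (measurableSet_le measurable_snd measurable_fst)
    have hKeq : (Function.uncurry fun z u => Set.indicator (Set.Ioc x z) φ u)
        = Set.indicator {p : ℝ × ℝ | x < p.2 ∧ p.2 ≤ p.1} (fun p => φ p.2) := by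
      funext p
      by_cases hp : p ∈ {p : ℝ × ℝ | x < p.2 ∧ p.2 ≤ p.1}
      · have hp' : x < p.2 ∧ p.2 ≤ p.1 := hp
        rw [Function.uncurry_apply_pair, Set.indicator_of_mem hp,
          Set.indicator_of_mem (Set.mem_Ioc.mpr hp')]
      · have hp' : ¬(x < p.2 ∧ p.2 ≤ p.1) := hp
        rw [Function.uncurry_apply_pair, Set.indicator_of_notMem hp,
          Set.indicator_of_notMem (fun h => hp' (Set.mem_Ioc.mp h))]
    have hmeasK : Measurable (Function.uncurry fun z u => Set.indicator (Set.Ioc x z) φ u) := by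
      rw [hKeq]
      exact (hφmeas.comp measurable_snd).indicator hS
    have hdom : Integrable
        (Set.indicator ((Set.univ : Set ℝ) ×ˢ Set.Icc A B) fun _ => M)
        ((Q.restrict (Set.Ici x)).prod volume) := by
      rw [integrable_indicator_iff (MeasurableSet.univ.prod measurableSet_Icc)]
      refine integrableOn_const ?_
      rw [Measure.prod_prod]
      exact (ENNReal.mul_lt_top (measure_lt_top _ _) measure_Icc_lt_top).ne
    refine hdom.mono hmeasK.aestronglyMeasurable (MeasureTheory.ae_of_all _ fun p => ?_)
    rw [hKeq]
    by_cases hp2 : p.2 ∈ Set.Icc A B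
    · rw [Set.indicator_of_mem (Set.mem_prod.mpr ⟨Set.mem_univ _, hp2⟩), Real.norm_eq_abs,
        Real.norm_eq_abs, abs_of_nonneg hM0]
      by_cases hp : p ∈ {p : ℝ × ℝ | x < p.2 ∧ p.2 ≤ p.1}
      · rw [Set.indicator_of_mem hp]; exact hφbdd _
      · rw [Set.indicator_of_notMem hp]; simpa using hM0
    · have hφ0 : φ p.2 = 0 := by rw [hφdef]; exact Set.indicator_of_notMem hp2 _
      by_cases hp : p ∈ {p : ℝ × ℝ | x < p.2 ∧ p.2 ≤ p.1}
      · rw [Set.indicator_of_mem hp, hφ0]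
        simp only [norm_zero]
        positivity
      · rw [Set.indicator_of_notMem hp]
        simp only [norm_zero]
        positivity
  have hswap : (∫ z in Set.Ici x, ∫ u, Set.indicator (Set.Ioc x z) φ u ∂volume ∂Q)
      = ∫ u, ∫ z in Set.Ici x, Set.indicator (Set.Ioc x z) φ u ∂Q ∂volume :=
    integral_integral_swap hK
  have hinner : ∀ u, (∫ z in Set.Ici x, Set.indicator (Set.Ioc x z) φ u ∂Q)
      = Set.indicator (Set.Ioi x) ψ u := by
    intro u
    by_cases hu : x < u
    · have heq : ∀ z, Set.indicator (Set.Ioc x z) φ u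
          = Set.indicator (Set.Ici u) (fun _ => φ u) z := by
        intro z
        by_cases hz : u ≤ z
        · rw [Set.indicator_of_mem (Set.mem_Ioc.mpr ⟨hu, hz⟩),
            Set.indicator_of_mem (Set.mem_Ici.mpr hz)]
        · rw [Set.indicator_of_notMem (fun h => hz (Set.mem_Ioc.mp h).2),
            Set.indicator_of_notMem (fun h => hz (Set.mem_Ici.mp h))]
      simp only [heq]
      rw [setIntegral_indicator measurableSet_Ici, setIntegral_const, Set.Ici_inter_Ici,
        max_eq_right hu.le, smul_eq_mul, measureReal_def, Set.indicator_of_mem (Set.mem_Ioi.mpr hu)]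
    · have heq : ∀ z, Set.indicator (Set.Ioc x z) φ u = (0 : ℝ) := fun z =>
        Set.indicator_of_notMem (fun h => hu (Set.mem_Ioc.mp h).1) _
      simp only [heq, integral_zero]
      rw [Set.indicator_of_notMem (fun h => hu (Set.mem_Ioi.mp h))]
  have hI : (∫ z in Set.Ici x, (G z - G x) ∂Q) = ∫ u in x..B, (1 - F u) * φ u := by
    rw [setIntegral_congr_fun measurableSet_Ici hGzx, hswap]
    simp only [hinner]
    rw [integral_indicator measurableSet_Ioi]
    have hsplit2 : (∫ u in Set.Ioi x, ψ u) = (∫ u in Set.Ioc x B, ψ u) + ∫ u in Set.Ioi B, ψ u := by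
      rw [← setIntegral_union (Set.Ioc_disjoint_Ioi le_rfl) measurableSet_Ioi
        hψint.integrableOn hψint.integrableOn, Set.Ioc_union_Ioi_eq_Ioi hxB]
    have hzero : (∫ u in Set.Ioi B, ψ u) = 0 := by
      rw [setIntegral_congr_fun measurableSet_Ioi (fun u hu => ?_), integral_zero]
      have hφ0 : φ u = 0 := by
        rw [hφdef]
        exact Set.indicator_of_notMem (fun h => absurd h.2 (not_le.mpr (Set.mem_Ioi.mp hu))) _
      show (Q (Set.Ici u)).toReal * φ u = 0
      rw [hφ0, mul_zero]
    rw [hsplit2, hzero, add_zero, ← intervalIntegral.integral_of_le hxB]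
    apply intervalIntegral.integral_congr
    intro u hu
    show (Q (Set.Ici u)).toReal * φ u = (1 - F u) * φ u
    rw [hcompl u]
  have hsplitJ : J = (∫ u in A..x, (1 - F u) * φ u) + ∫ u in x..B, (1 - F u) * φ u := by
    rw [hJdef]
    exact (intervalIntegral.integral_add_adjacent_intervals (hψ'int A x) (hψ'int x B)).symm
  have hGx : G x - (∫ u in A..x, (1 - F u) * φ u) = f x - f A := by
    have h1 : G x - (∫ u in A..x, (1 - F u) * φ u)
        = ∫ u in A..x, (φ u - (1 - F u) * φ u) := by
      rw [hGdef]
      exact (intervalIntegral.integral_sub hφint.intervalIntegrable (hψ'int A x)).symm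
    rw [h1]
    have h2 : Set.EqOn (fun u => φ u - (1 - F u) * φ u) (deriv f) (Set.uIcc A x) := by
      intro u hu
      rw [Set.uIcc_of_le hxA] at hu
      have huAB : u ∈ Set.Icc A B := ⟨hu.1, hu.2.trans hxB⟩
      have hFpos : (0 : ℝ) < F u := lt_of_lt_of_le hε (hFε u hu.1)
      have hφu : φ u = deriv f u / F u := by rw [hφdef]; exact Set.indicator_of_mem huAB _
      simp only
      rw [hφu]
      field_simp
      ring
    rw [intervalIntegral.integral_congr h2]
    exact intervalIntegral.integral_deriv_eq_sub
      (fun y _ => (hf.differentiable one_ne_zero).differentiableAt) (hderiv_cont.intervalIntegrable _ _)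
  calc (∫ z, (f A - J + G (if z < x then x else z)) ∂Q)
      = (Q (Set.Iio x)).toReal * (f A - J + G x)
        + ((Q (Set.Ici x)).toReal * (f A - J + G x) + ∫ z in Set.Ici x, (G z - G x) ∂Q) := by
        rw [hsplit, hIci]
    _ = ((Q (Set.Iio x)).toReal + (Q (Set.Ici x)).toReal) * (f A - J + G x)
        + ∫ u in x..B, (1 - F u) * φ u := by rw [hI]; ring
    _ = f A - J + G x + ∫ u in x..B, (1 - F u) * φ u := by rw [hone, one_mul]
    _ = f x := by
        have h3 := hGx
        have h4 := hsplitJ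
        linarith
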